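/- Let W ≤ GL(V) be a nontrivial irreducible well-generated complex reflection group, and let W_X be a proper parabolic subgroup of W (i.e. W_X ≠ W, associated to a flat X). Then the set R ∖ W_X of reflections of W not lying in W_X generates the whole group W. -/

import Mathlib

open scoped BigOperators

noncomputable section

namespace CD

variable {V : Type*} [AddCommGroup V] [Module ℂ V]

/-- A unitary reflection: an invertible linear map whose fixed space is a hyperplane. -/
def IsReflection (τ : (V →ₗ[ℂ] V)ˣ) : Prop :=
  Module.finrank ℂ V =
    Module.finrank ℂ (LinearMap.ker ((τ : V →ₗ[ℂ] V) - LinearMap.id)) + 1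

/-- The set of reflections of a subgroup `W ≤ GL(V)`. -/
def reflections (W : Subgroup (V →ₗ[ℂ] V)ˣ) : Set ((V →ₗ[ℂ] V)ˣ) :=
  {τ | τ ∈ W ∧ IsReflection τ}

/-- The set of reflecting hyperplanes of `W`. -/
def hyperplanes (W : Subgroup (V →ₗ[ℂ] V)ˣ) : Set (Submodule ℂ V) :=
  (fun τ : (V →ₗ[ℂ] V)ˣ => LinearMap.ker ((τ : V →ₗ[ℂ] V) - LinearMap.id)) '' reflections W

/-- `W` is a complex reflection group: a finite subgroup of `GL(V)` generated by
its reflections. -/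
def IsReflectionGroup (W : Subgroup (V →ₗ[ℂ] V)ˣ) : Prop :=
  (W : Set ((V →ₗ[ℂ] V)ˣ)).Finite ∧ Subgroup.closure (reflections W) = W

/-- `W` is irreducible: the only `W`-stable subspaces of `V` are `0` and `V`. -/
def IsIrreducible (W : Subgroup (V →ₗ[ℂ] V)ˣ) : Prop :=
  ∀ U : Submodule ℂ V, (∀ w ∈ W, ∀ v ∈ U, (w : V →ₗ[ℂ] V) v ∈ U) → U = ⊥ ∨ U = ⊤

/-- A regular vector: one lying on no reflecting hyperplane. -/
def IsRegular (W : Subgroup (V →ₗ[ℂ] V)ˣ) (v : V) : Prop :=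
  ∀ H ∈ hyperplanes W, v ∉ H

/-- A Coxeter element: an element of `W` with a regular eigenvector of
eigenvalue `exp(2πi/h)`. -/
def IsCoxeterElement (W : Subgroup (V →ₗ[ℂ] V)ˣ) (h : ℕ) (c : (V →ₗ[ℂ] V)ˣ) : Prop :=
  c ∈ W ∧ ∃ v : V, IsRegular W v ∧
    (c : V →ₗ[ℂ] V) v = Complex.exp (2 * Real.pi * Complex.I / (h : ℂ)) • v

/-- A flat: an intersection of reflecting hyperplanes (with `V` itself the empty
intersection). -/
def IsFlat (W : Subgroup (V →ₗ[ℂ] V)ˣ) (X : Submodule ℂ V) : Prop :=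
  ∃ S ⊆ hyperplanes W, X = sInf S

/-- The parabolic subgroup of `W` attached to a subspace `X`: the elements of `W`
fixing `X` pointwise. -/
def parabolic (W : Subgroup (V →ₗ[ℂ] V)ˣ) (X : Submodule ℂ V) :
    Subgroup (V →ₗ[ℂ] V)ˣ where
  carrier := {w | w ∈ W ∧ ∀ x ∈ X, (w : V →ₗ[ℂ] V) x = x}
  one_mem' := ⟨W.one_mem, fun _ _ => rfl⟩
  mul_mem' := by
    rintro a b ⟨ha, ha'⟩ ⟨hb, hb'⟩
    refine ⟨W.mul_mem ha hb, fun x hx => ?_⟩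
    have : ((a * b : (V →ₗ[ℂ] V)ˣ) : V →ₗ[ℂ] V) x
        = (a : V →ₗ[ℂ] V) ((b : V →ₗ[ℂ] V) x) := rfl
    rw [this, hb' x hx, ha' x hx]
  inv_mem' := by
    rintro a ⟨ha, ha'⟩
    refine ⟨W.inv_mem ha, fun x hx => ?_⟩
    conv_lhs => rw [← ha' x hx]
    have : ((a⁻¹ : (V →ₗ[ℂ] V)ˣ) : V →ₗ[ℂ] V) ((a : V →ₗ[ℂ] V) x)
        = (((a⁻¹ * a : (V →ₗ[ℂ] V)ˣ) : V →ₗ[ℂ] V)) x := rfl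
    rw [this, inv_mul_cancel]
    rfl

/-- A parabolic tower: a chain `{1} = W₀ ≤ W₁ ≤ ⋯ ≤ Wₙ = W` of parabolic subgroups
attached to a decreasing chain of flats `Xᵢ` with `codim Xᵢ = i`. -/
def IsParabolicTower (W : Subgroup (V →ₗ[ℂ] V)ˣ) (n : ℕ)
    (Wt : ℕ → Subgroup (V →ₗ[ℂ] V)ˣ) : Prop :=
  ∃ Xs : ℕ → Submodule ℂ V,
    (∀ i ≤ n, IsFlat W (Xs i)) ∧
    (∀ i ≤ n, Module.finrank ℂ V = Module.finrank ℂ (Xs i) + i) ∧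
    (∀ i, i < n → Xs (i + 1) ≤ Xs i) ∧
    (∀ i ≤ n, Wt i = parabolic W (Xs i)) ∧
    (∀ i, i < n → Wt i ≤ Wt (i + 1)) ∧
    Wt 0 = ⊥ ∧ Wt n = W

/-- The weighted Laplacian attached to a set of reflections and a weight function. -/
def lap (Rs : Set ((V →ₗ[ℂ] V)ˣ)) (wt : (V →ₗ[ℂ] V)ˣ → ℂ) : V →ₗ[ℂ] V :=
  ∑ᶠ τ ∈ Rs, wt τ • ((LinearMap.id : V →ₗ[ℂ] V) - (τ : V →ₗ[ℂ] V))

section Aux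

variable [FiniteDimensional ℂ V]

lemma CDaux.mem_parabolic {W : Subgroup (V →ₗ[ℂ] V)ˣ} {X : Submodule ℂ V}
    {w : (V →ₗ[ℂ] V)ˣ} :
    w ∈ parabolic W X ↔ w ∈ W ∧ ∀ x ∈ X, (w : V →ₗ[ℂ] V) x = x :=
  Iff.rfl

/-- Conjugates of reflections are reflections. -/
lemma CDaux.isReflection_conj {τ : (V →ₗ[ℂ] V)ˣ} (w : (V →ₗ[ℂ] V)ˣ)
    (h : IsReflection τ) : IsReflection (w * τ * w⁻¹) := by
  set a : V →ₗ[ℂ] V := (w : V →ₗ[ℂ] V) with ha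
  set b : V →ₗ[ℂ] V := (τ : V →ₗ[ℂ] V) with hb
  set c : V →ₗ[ℂ] V := ((w⁻¹ : (V →ₗ[ℂ] V)ˣ) : V →ₗ[ℂ] V) with hc
  have hac : a * c = 1 := by rw [ha, hc, ← Units.val_mul, mul_inv_cancel, Units.val_one]
  have hca : c * a = 1 := by rw [ha, hc, ← Units.val_mul, inv_mul_cancel, Units.val_one]
  have hker : LinearMap.ker (((w * τ * w⁻¹ : (V →ₗ[ℂ] V)ˣ) : V →ₗ[ℂ] V) - LinearMap.id)
      = Submodule.comap c (LinearMap.ker (b - LinearMap.id)) := by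
    have h1 : (((w * τ * w⁻¹ : (V →ₗ[ℂ] V)ˣ) : V →ₗ[ℂ] V) - LinearMap.id)
        = a * ((b - LinearMap.id) * c) := by
      have hco : ((w * τ * w⁻¹ : (V →ₗ[ℂ] V)ˣ) : V →ₗ[ℂ] V) = a * b * c := by
        rw [Units.val_mul, Units.val_mul]
      rw [hco, ← Module.End.one_eq_id, sub_mul, one_mul, mul_sub, ← mul_assoc, hac]
    have hkera : LinearMap.ker a = ⊥ := by
      rw [LinearMap.ker_eq_bot]
      intro x y hxy
      have hx : c (a x) = c (a y) := congrArg c hxy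
      rwa [← Module.End.mul_apply, ← Module.End.mul_apply, hca, Module.End.one_apply,
        Module.End.one_apply] at hx
    rw [h1, Module.End.mul_eq_comp, Module.End.mul_eq_comp, LinearMap.ker_comp,
      hkera, Submodule.comap_bot, LinearMap.ker_comp]
  unfold IsReflection at h ⊢
  rw [hker]
  have hceq : c = ((LinearMap.GeneralLinearGroup.toLinearEquiv w⁻¹ : V ≃ₗ[ℂ] V) :
      V →ₗ[ℂ] V) := rfl
  rw [hceq, Submodule.comap_equiv_eq_map_symm, LinearEquiv.finrank_map_eq]
  exact h

/-- The trace of `1 - τ` for a finite-order reflection `τ` has positive real part. -/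
lemma CDaux.trace_re_pos {τ : (V →ₗ[ℂ] V)ˣ} (h : IsReflection τ) {m : ℕ} (hm : m ≠ 0)
    (hpow : τ ^ m = 1) :
    0 < ((LinearMap.trace ℂ V) ((1 : V →ₗ[ℂ] V) - (τ : V →ₗ[ℂ] V))).re := by
  set t : V →ₗ[ℂ] V := (τ : V →ₗ[ℂ] V) with htdef
  have ht : t ^ m = 1 := by
    rw [htdef, ← Units.val_pow_eq_pow_val, hpow, Units.val_one]
  set g : V →ₗ[ℂ] V := 1 - t with hgdef
  set K := LinearMap.ker g with hK
  set R1 := LinearMap.range g with hR1def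
  have hKK : LinearMap.ker (t - LinearMap.id) = K := by
    ext v
    simp only [hK, hgdef, LinearMap.mem_ker, LinearMap.sub_apply, LinearMap.id_apply,
      Module.End.one_apply, sub_eq_zero]
    exact ⟨fun hv => hv.symm, fun hv => hv.symm⟩
  have hfin : Module.finrank ℂ V = Module.finrank ℂ K + 1 := by
    rw [← hKK]; exact h
  have hrank : Module.finrank ℂ R1 + Module.finrank ℂ K = Module.finrank ℂ V :=
    LinearMap.finrank_range_add_finrank_ker g
  have hR1 : Module.finrank ℂ R1 = 1 := by omega
  -- fixed vectors of t meet `R1` trivially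
  have hdisj : Disjoint K R1 := by
    rw [Submodule.disjoint_def]
    intro x hxK hxR1
    obtain ⟨u, hu⟩ := hxR1
    have htx : t x = x := by
      have := hxK
      rw [hK, LinearMap.mem_ker, hgdef, LinearMap.sub_apply, Module.End.one_apply,
        sub_eq_zero] at this
      exact this.symm
    have hpows : ∀ i : ℕ, (t ^ i) x = x := by
      intro i
      induction i with
      | zero => simp
      | succ k ih => rw [pow_succ, Module.End.mul_apply, htx, ih]
    have hgeom : ((∑ i ∈ Finset.range m, t ^ i) * (t - 1)) = 0 := by
      rw [geom_sum_mul, ht, sub_self]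
    have hx0 : (∑ i ∈ Finset.range m, t ^ i) x = (m : ℂ) • x := by
      rw [LinearMap.sum_apply]
      simp only [hpows]
      rw [Finset.sum_const, Finset.card_range, Nat.cast_smul_eq_nsmul]
    have hx0' : (∑ i ∈ Finset.range m, t ^ i) x = 0 := by
      have hxneg : x = -((t - 1) u) := by
        rw [← hu, hgdef]
        simp [LinearMap.sub_apply]
      rw [hxneg, map_neg, neg_eq_zero, ← Module.End.mul_apply, hgeom, LinearMap.zero_apply]
    rw [hx0'] at hx0
    have := hx0.symm
    rw [smul_eq_zero] at this
    rcases this with hm0 | hx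
    · exact absurd (Nat.cast_eq_zero.mp hm0) hm
    · exact hx
  have hsup : K ⊔ R1 = ⊤ := by
    apply Submodule.eq_top_of_disjoint
    · omega
    · exact hdisj
  have hcompl : IsCompl K R1 := ⟨hdisj, codisjoint_iff.mpr hsup⟩
  -- a generator of the line `R1`
  obtain ⟨e₀, he₀ne, hspan⟩ := finrank_eq_one_iff'.mp hR1
  have hR1inv : ∀ x ∈ R1, t x ∈ R1 := by
    intro x hx
    have h1 : t x = x - g x := by
      rw [hgdef]; simp [LinearMap.sub_apply]
    rw [h1]
    exact Submodule.sub_mem _ hx (LinearMap.mem_range_self g x)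
  have hte₀ : t (e₀ : V) ∈ R1 := hR1inv _ e₀.2
  obtain ⟨lam, hlam⟩ := hspan ⟨t (e₀ : V), hte₀⟩
  have hlam' : t (e₀ : V) = lam • (e₀ : V) := by
    have := congrArg (Subtype.val) hlam
    simpa using this.symm
  have he₀V : (e₀ : V) ≠ 0 := fun hh => he₀ne (Subtype.ext hh)
  have hpowlam : ∀ i : ℕ, (t ^ i) (e₀ : V) = lam ^ i • (e₀ : V) := by
    intro i
    induction i with
    | zero => simp
    | succ k ih =>
      rw [pow_succ, Module.End.mul_apply, hlam', map_smul, ih, pow_succ, smul_smul, mul_comm]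
  have hlampow : lam ^ m = 1 := by
    have h1 : (t ^ m) (e₀ : V) = (e₀ : V) := by rw [ht, Module.End.one_apply]
    rw [hpowlam m] at h1
    have h2 : (lam ^ m - 1) • (e₀ : V) = 0 := by
      rw [sub_smul, one_smul, h1, sub_self]
    rcases smul_eq_zero.mp h2 with h3 | h3
    · linear_combination h3
    · exact absurd h3 he₀V
  have hlamne : lam ≠ 1 := by
    intro h1
    have h2 : (e₀ : V) ∈ K := by
      rw [hK, LinearMap.mem_ker, hgdef, LinearMap.sub_apply, Module.End.one_apply,
        hlam', h1, one_smul, sub_self]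
    have h3 : (e₀ : V) = 0 := (Submodule.disjoint_def.mp hdisj) _ h2 e₀.2
    exact he₀V h3
  -- the projection onto `R1` along `K`
  set π : V →ₗ[ℂ] V :=
    R1.subtype.comp (Submodule.projectionOnto R1 K hcompl.symm) with hπdef
  have hπproj : LinearMap.IsProj R1 π := by
    constructor
    · intro x
      exact (Submodule.projectionOnto R1 K hcompl.symm x).2
    · intro x hx
      rw [hπdef, LinearMap.comp_apply]
      have := Submodule.projectionOnto_apply_left hcompl.symm ⟨x, hx⟩
      rw [this]
      rfl
  have hg_eq : g = (1 - lam) • π := by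
    apply LinearMap.ext
    intro v
    have hv : v ∈ K ⊔ R1 := by rw [hsup]; exact Submodule.mem_top
    obtain ⟨k, hk, r, hr, rfl⟩ := Submodule.mem_sup.mp hv
    obtain ⟨cr, hcr⟩ := hspan ⟨r, hr⟩
    have hrval : r = cr • (e₀ : V) := by
      have := congrArg Subtype.val hcr
      simpa using this.symm
    have hgk : g k = 0 := hk
    have htr : t r = lam • r := by
      rw [hrval, map_smul, hlam', smul_smul, smul_smul, mul_comm]
    have hgr : g r = (1 - lam) • r := by
      rw [hgdef, LinearMap.sub_apply, Module.End.one_apply, htr, sub_smul, one_smul]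
    have hπk : π k = 0 := by
      rw [hπdef, LinearMap.comp_apply,
        Submodule.projectionOnto_apply_of_mem_right hcompl.symm hk]
      rfl
    have hπr : π r = r := by
      rw [hπdef, LinearMap.comp_apply]
      have := Submodule.projectionOnto_apply_left hcompl.symm ⟨r, hr⟩
      rw [this]
      rfl
    rw [map_add, hgk, zero_add, hgr, LinearMap.smul_apply, map_add, hπk, zero_add, hπr]
  have htrace : (LinearMap.trace ℂ V) g = 1 - lam := by
    rw [hg_eq, map_smul, hπproj.trace, hR1, Nat.cast_one, smul_eq_mul, mul_one]
  rw [htrace]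
  -- `lam` is a root of unity different from 1, so `Re lam < 1`
  have habs : ‖lam‖ = 1 := by
    have h1 : ‖lam‖ ^ m = 1 := by
      rw [← norm_pow, hlampow, norm_one]
    rcases (pow_eq_one_iff_of_ne_zero hm).mp h1 with h2 | h2
    · exact h2
    · exfalso
      have := norm_nonneg lam
      rw [h2.1] at this
      linarith
  have hre : lam.re < 1 := by
    have hle : lam.re ≤ 1 := by
      have := Complex.re_le_norm lam
      rwa [habs] at this
    rcases lt_or_eq_of_le hle with h1 | h1
    · exact h1
    · exfalso
      apply hlamne
      have hnormsq : lam.re ^ 2 + lam.im ^ 2 = 1 := by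
        have := Complex.sq_norm lam
        rw [habs, one_pow, Complex.normSq_apply] at this
        nlinarith [this]
      have him : lam.im = 0 := by nlinarith [h1]
      apply Complex.ext
      · simpa using h1
      · simpa using him
  simp only [Complex.sub_re, Complex.one_re]
  linarith

end Aux

/-- In a nontrivial irreducible well-generated complex reflection
group `W`, the reflections lying outside any proper parabolic subgroup `W_X`
generate the whole group `W`. -/
theorem reflections_outside_proper_parabolic_generate
    [FiniteDimensional ℂ V] (n : ℕ) (hn : Module.finrank ℂ V = n)
    (W : Subgroup (V →ₗ[ℂ] V)ˣ)
    (hW : IsReflectionGroup W) (hnontrivial : W ≠ ⊥) (hirr : IsIrreducible W)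
    (h : ℕ) (hh : h * n = (reflections W).ncard + (hyperplanes W).ncard)
    (hwellgen : ∃ c, IsCoxeterElement W h c)
    (X : Submodule ℂ V) (hX : IsFlat W X) (hproper : parabolic W X ≠ W) :
    Subgroup.closure {τ | τ ∈ reflections W ∧ τ ∉ parabolic W X} = W := by
  classical
  obtain ⟨hWfin, hWgen⟩ := hW
  set S : Set ((V →ₗ[ℂ] V)ˣ) := {τ | τ ∈ reflections W ∧ τ ∉ parabolic W X} with hSdef
  set W₂ : Subgroup ((V →ₗ[ℂ] V)ˣ) := Subgroup.closure S with hW₂def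
  have hSW : S ⊆ (W : Set ((V →ₗ[ℂ] V)ˣ)) := fun τ hτ => hτ.1.1
  have hW₂le : W₂ ≤ W := (Subgroup.closure_le W).2 hSW
  -- `X` is nonzero since the parabolic is proper
  have hXne : X ≠ ⊥ := by
    intro hbot
    apply hproper
    ext w
    constructor
    · exact fun hw => hw.1
    · intro hw
      refine ⟨hw, fun x hx => ?_⟩
      rw [hbot, Submodule.mem_bot] at hx
      rw [hx]
      exact map_zero _
  obtain ⟨x₀, hx₀X, hx₀ne⟩ := (Submodule.ne_bot_iff X).mp hXne
  -- conjugation by the parabolic preserves `S`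
  have hconjS : ∀ p ∈ parabolic W X, ∀ s ∈ S, p * s * p⁻¹ ∈ S := by
    intro p hp s hs
    refine ⟨⟨W.mul_mem (W.mul_mem hp.1 hs.1.1) (W.inv_mem hp.1),
      CDaux.isReflection_conj p hs.1.2⟩, ?_⟩
    intro hmem
    apply hs.2
    have h2 : s = p⁻¹ * (p * s * p⁻¹) * p := by group
    rw [h2]
    exact mul_mem (mul_mem ((parabolic W X).inv_mem hp) hmem) hp
  -- hence the parabolic normalizes `W₂`
  have hPnorm : ∀ p ∈ parabolic W X, ∀ g ∈ W₂, p * g * p⁻¹ ∈ W₂ := by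
    intro p hp g hg
    refine Subgroup.closure_induction ?_ ?_ ?_ ?_ hg
    · intro s hsS
      exact Subgroup.subset_closure (hconjS p hp s hsS)
    · simpa using W₂.one_mem
    · intro a b _ _ ha hb
      have hab : p * (a * b) * p⁻¹ = (p * a * p⁻¹) * (p * b * p⁻¹) := by group
      rw [hab]
      exact mul_mem ha hb
    · intro a _ ha
      have hai : p * a⁻¹ * p⁻¹ = (p * a * p⁻¹)⁻¹ := by group
      rw [hai]
      exact inv_mem ha
  -- all of `W` normalizes `W₂`
  have hWnorm : ∀ w ∈ W, w ∈ Subgroup.normalizer (W₂ : Set ((V →ₗ[ℂ] V)ˣ)) := by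
    have hle : W ≤ Subgroup.normalizer (W₂ : Set ((V →ₗ[ℂ] V)ˣ)) := by
      conv_lhs => rw [← hWgen]
      refine (Subgroup.closure_le _).2 ?_
      intro τ hτ
      by_cases hτP : τ ∈ parabolic W X
      · refine Subgroup.mem_normalizer_iff.2 fun g => ⟨fun hg => hPnorm τ hτP g hg, fun hg => ?_⟩
        have h2 := hPnorm τ⁻¹ ((parabolic W X).inv_mem hτP) _ hg
        have h3 : τ⁻¹ * (τ * g * τ⁻¹) * τ⁻¹⁻¹ = g := by group
        rwa [h3] at h2
      · exact Subgroup.le_normalizer (Subgroup.subset_closure ⟨hτ, hτP⟩)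
    exact fun w hw => hle hw
  -- the finite set of reflections outside `W₂`
  have hRfin : (reflections W).Finite := hWfin.subset fun τ hτ => hτ.1
  have hTfin : {τ | τ ∈ reflections W ∧ τ ∉ W₂}.Finite := hRfin.subset fun τ hτ => hτ.1
  set TF : Finset ((V →ₗ[ℂ] V)ˣ) := hTfin.toFinset with hTFdef
  have hTFmem : ∀ {τ}, τ ∈ TF ↔ τ ∈ reflections W ∧ τ ∉ W₂ := by
    intro τ
    rw [hTFdef, Set.Finite.mem_toFinset]
    exact Iff.rfl
  set L : V →ₗ[ℂ] V := ∑ τ ∈ TF, ((1 : V →ₗ[ℂ] V) - (τ : V →ₗ[ℂ] V)) with hLdef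
  -- reflections outside `W₂` lie in the parabolic, hence fix `X`
  have hTP : ∀ τ ∈ TF, τ ∈ parabolic W X := by
    intro τ hτ
    rw [hTFmem] at hτ
    by_contra hτP
    exact hτ.2 (Subgroup.subset_closure ⟨hτ.1, hτP⟩)
  have hLX : L x₀ = 0 := by
    rw [hLdef, LinearMap.sum_apply]
    refine Finset.sum_eq_zero fun τ hτ => ?_
    have hfix := (hTP τ hτ).2 x₀ hx₀X
    rw [LinearMap.sub_apply, Module.End.one_apply, hfix, sub_self]
  -- conjugation by `W` preserves `TF`
  have hconjTF : ∀ w ∈ W, ∀ τ ∈ TF, w * τ * w⁻¹ ∈ TF := by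
    intro w hw τ hτ
    rw [hTFmem] at hτ ⊢
    refine ⟨⟨W.mul_mem (W.mul_mem hw hτ.1.1) (W.inv_mem hw),
      CDaux.isReflection_conj w hτ.1.2⟩, ?_⟩
    intro hmem
    exact hτ.2 ((Subgroup.mem_normalizer_iff.1 (hWnorm w hw) τ).2 hmem)
  -- `L` commutes with the action of `W`
  have hcomm : ∀ w ∈ W, ((w : (V →ₗ[ℂ] V)ˣ) : V →ₗ[ℂ] V) * L
      = L * ((w : (V →ₗ[ℂ] V)ˣ) : V →ₗ[ℂ] V) := by
    intro w hw
    have h2 : ((w : (V →ₗ[ℂ] V)ˣ) : V →ₗ[ℂ] V) * ((w⁻¹ : (V →ₗ[ℂ] V)ˣ) : V →ₗ[ℂ] V) = 1 := by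
      rw [← Units.val_mul, mul_inv_cancel, Units.val_one]
    have h2' : ((w⁻¹ : (V →ₗ[ℂ] V)ˣ) : V →ₗ[ℂ] V) * ((w : (V →ₗ[ℂ] V)ˣ) : V →ₗ[ℂ] V) = 1 := by
      rw [← Units.val_mul, inv_mul_cancel, Units.val_one]
    have hterm : ∀ τ : (V →ₗ[ℂ] V)ˣ,
        ((w : (V →ₗ[ℂ] V)ˣ) : V →ₗ[ℂ] V) * ((1 : V →ₗ[ℂ] V) - (τ : V →ₗ[ℂ] V))
          * ((w⁻¹ : (V →ₗ[ℂ] V)ˣ) : V →ₗ[ℂ] V)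
        = (1 : V →ₗ[ℂ] V) - ((w * τ * w⁻¹ : (V →ₗ[ℂ] V)ˣ) : V →ₗ[ℂ] V) := by
      intro τ
      have h1 : ((w * τ * w⁻¹ : (V →ₗ[ℂ] V)ˣ) : V →ₗ[ℂ] V)
          = ((w : (V →ₗ[ℂ] V)ˣ) : V →ₗ[ℂ] V) * (τ : V →ₗ[ℂ] V)
            * ((w⁻¹ : (V →ₗ[ℂ] V)ˣ) : V →ₗ[ℂ] V) := by
        rw [Units.val_mul, Units.val_mul]
      rw [mul_sub, mul_one, sub_mul, h2, h1]
    have key : ((w : (V →ₗ[ℂ] V)ˣ) : V →ₗ[ℂ] V) * L * ((w⁻¹ : (V →ₗ[ℂ] V)ˣ) : V →ₗ[ℂ] V)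
        = L := by
      rw [hLdef, Finset.mul_sum, Finset.sum_mul]
      simp only [hterm]
      refine Finset.sum_bij' (fun τ _ => w * τ * w⁻¹) (fun σ _ => w⁻¹ * σ * w)
        ?_ ?_ ?_ ?_ ?_
      · intro a ha
        exact hconjTF w hw a ha
      · intro a ha
        have := hconjTF w⁻¹ (W.inv_mem hw) a ha
        simpa using this
      · intro a _
        group
      · intro a _
        group
      · intro a _
        rfl
    calc ((w : (V →ₗ[ℂ] V)ˣ) : V →ₗ[ℂ] V) * L
        = ((w : (V →ₗ[ℂ] V)ˣ) : V →ₗ[ℂ] V) * L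
            * (((w⁻¹ : (V →ₗ[ℂ] V)ˣ) : V →ₗ[ℂ] V)
              * ((w : (V →ₗ[ℂ] V)ˣ) : V →ₗ[ℂ] V)) := by rw [h2', mul_one]
      _ = (((w : (V →ₗ[ℂ] V)ˣ) : V →ₗ[ℂ] V) * L * ((w⁻¹ : (V →ₗ[ℂ] V)ˣ) : V →ₗ[ℂ] V))
            * ((w : (V →ₗ[ℂ] V)ˣ) : V →ₗ[ℂ] V) := by rw [mul_assoc, mul_assoc, mul_assoc]
      _ = L * ((w : (V →ₗ[ℂ] V)ˣ) : V →ₗ[ℂ] V) := by rw [key]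
  -- the kernel of `L` is `W`-stable and nonzero, hence everything: `L = 0`
  have hker_stable : ∀ w ∈ W, ∀ v ∈ LinearMap.ker L, ((w : (V →ₗ[ℂ] V)ˣ) : V →ₗ[ℂ] V) v
      ∈ LinearMap.ker L := by
    intro w hw v hv
    rw [LinearMap.mem_ker] at hv ⊢
    have h1 : L (((w : (V →ₗ[ℂ] V)ˣ) : V →ₗ[ℂ] V) v)
        = (L * ((w : (V →ₗ[ℂ] V)ˣ) : V →ₗ[ℂ] V)) v := rfl
    rw [h1, ← hcomm w hw, Module.End.mul_apply, hv, map_zero]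
  have hL0 : L = 0 := by
    rcases hirr (LinearMap.ker L) hker_stable with h0 | h1
    · exfalso
      apply hx₀ne
      have hx₀ker : x₀ ∈ LinearMap.ker L := LinearMap.mem_ker.2 hLX
      rw [h0, Submodule.mem_bot] at hx₀ker
      exact hx₀ker
    · exact LinearMap.ker_eq_top.1 h1
  -- taking traces shows `TF` is empty
  haveI : Finite (W : Set ((V →ₗ[ℂ] V)ˣ)) := hWfin.to_subtype
  have hTFempty : TF = ∅ := by
    by_contra hne
    have htr : (∑ τ ∈ TF, (LinearMap.trace ℂ V) ((1 : V →ₗ[ℂ] V) - (τ : V →ₗ[ℂ] V))) = 0 := by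
      rw [← map_sum, ← hLdef, hL0, map_zero]
    have hpos : 0 < (∑ τ ∈ TF,
        (LinearMap.trace ℂ V) ((1 : V →ₗ[ℂ] V) - (τ : V →ₗ[ℂ] V))).re := by
      rw [Complex.re_sum]
      refine Finset.sum_pos ?_ (Finset.nonempty_iff_ne_empty.2 hne)
      intro τ hτ
      have hτ' := hTFmem.1 hτ
      have hτW : τ ∈ W := hτ'.1.1
      set m : ℕ := orderOf (⟨τ, hτW⟩ : W) with hmdef
      have hm : m ≠ 0 := by
        have : 0 < orderOf (⟨τ, hτW⟩ : W) := orderOf_pos _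
        omega
      have hpow : τ ^ m = 1 := by
        have h1 := pow_orderOf_eq_one (⟨τ, hτW⟩ : W)
        have h2 := congrArg (fun z : W => (z : (V →ₗ[ℂ] V)ˣ)) h1
        simpa [hmdef] using h2
      exact CDaux.trace_re_pos hτ'.1.2 hm hpow
    rw [htr] at hpos
    simp at hpos
  -- hence all reflections lie in `W₂`, which therefore is all of `W`
  have hRW₂ : reflections W ⊆ (W₂ : Set ((V →ₗ[ℂ] V)ˣ)) := by
    intro τ hτ
    by_contra hτW₂
    have : τ ∈ TF := hTFmem.2 ⟨hτ, hτW₂⟩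
    rw [hTFempty] at this
    exact absurd this (Finset.notMem_empty τ)
  refine le_antisymm hW₂le ?_
  conv_lhs => rw [← hWgen]
  exact (Subgroup.closure_le _).2 hRW₂

end CD
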